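/- For a circularly symmetric Gaussian LSSP with covariance R_X(t,s) = Q(√(ts)) C_X(t/s), the cross term D₁(θ,τ) := ∫₀^∞∫₀^∞ R_X(t₁√τ, t₂√τ) R_X*(t₁/√τ, t₂/√τ) t₁^{-i2πθ-1} t₂^{i2πθ-1} dt₁ dt₂ factorizes as D₁(θ,τ) = (M|C_X|²)(i2πθ) · ∫₀^∞ Q(u√τ) Q*(u/√τ) du/u. -/

import Mathlib

open Real MeasureTheory

noncomputable section D1Aux

/-- The change-of-variables map `(u, v) ↦ (u √v, u / √v)`. -/
def d1Map : ℝ × ℝ → ℝ × ℝ := fun p => (p.1 * Real.sqrt p.2, p.1 / Real.sqrt p.2)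

/-- Its derivative (as a matrix-induced continuous linear map). -/
def d1Der (p : ℝ × ℝ) : (ℝ × ℝ) →L[ℝ] ℝ × ℝ :=
  LinearMap.toContinuousLinearMap (Matrix.toLin (Module.Basis.finTwoProd ℝ) (Module.Basis.finTwoProd ℝ)
    !![Real.sqrt p.2, p.1 * (1 / (2 * Real.sqrt p.2));
       (Real.sqrt p.2)⁻¹, p.1 * (-(1 / (2 * Real.sqrt p.2)) / Real.sqrt p.2 ^ 2)])

theorem d1Map_hasFDerivAt {p : ℝ × ℝ} (hp : 0 < p.2) :
    HasFDerivAt d1Map (d1Der p) p := by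
  have hs : Real.sqrt p.2 ≠ 0 := (Real.sqrt_pos.2 hp).ne'
  have hsq : HasDerivAt Real.sqrt (1 / (2 * Real.sqrt p.2)) p.2 :=
    Real.hasDerivAt_sqrt hp.ne'
  have h1 : HasFDerivAt (fun q : ℝ × ℝ => q.1 * Real.sqrt q.2)
      ((Real.sqrt p.2) • ContinuousLinearMap.fst ℝ ℝ ℝ +
        (p.1 * (1 / (2 * Real.sqrt p.2))) • ContinuousLinearMap.snd ℝ ℝ ℝ) p := by
    have := hasFDerivAt_fst.mul (𝕜 := ℝ) (hsq.comp_hasFDerivAt p hasFDerivAt_snd)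
    exact this.congr_fderiv (by ext q <;> simp [smul_smul] <;> ring)
  have h2 : HasFDerivAt (fun q : ℝ × ℝ => q.1 / Real.sqrt q.2)
      (((Real.sqrt p.2)⁻¹) • ContinuousLinearMap.fst ℝ ℝ ℝ +
        (p.1 * (-(1 / (2 * Real.sqrt p.2)) / Real.sqrt p.2 ^ 2)) •
          ContinuousLinearMap.snd ℝ ℝ ℝ) p := by
    have hinv : HasDerivAt (fun x => (Real.sqrt x)⁻¹)
        (-(1 / (2 * Real.sqrt p.2)) / Real.sqrt p.2 ^ 2) p.2 := hsq.inv hs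
    have := hasFDerivAt_fst.mul (𝕜 := ℝ) (hinv.comp_hasFDerivAt p hasFDerivAt_snd)
    simp only [div_eq_mul_inv]
    exact this.congr_fderiv (by ext q <;> simp [smul_smul] <;> ring)
  have := h1.prodMk h2
  rwa [d1Der, Matrix.toLin_finTwoProd_toContinuousLinearMap]

theorem d1Der_det {p : ℝ × ℝ} (hp : 0 < p.2) : (d1Der p).det = -(p.1 / p.2) := by
  have hs : Real.sqrt p.2 ≠ 0 := (Real.sqrt_pos.2 hp).ne'
  have hss : Real.sqrt p.2 * Real.sqrt p.2 = p.2 := Real.mul_self_sqrt hp.le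
  simp only [d1Der, ContinuousLinearMap.det, LinearMap.coe_toContinuousLinearMap, LinearMap.det_toLin,
    Matrix.det_fin_two_of]
  set s := Real.sqrt p.2 with hsdef
  rw [← hss]
  field_simp
  ring

end D1Aux

section D1Aux2

theorem d1_cpow_split {u v : ℝ} (hu : 0 < u) (hv : 0 < v) (s : ℂ) :
    ((u * Real.sqrt v : ℝ) : ℂ) ^ (-s - 1) * ((u / Real.sqrt v : ℝ) : ℂ) ^ (s - 1)
      = ((u : ℂ) ^ (-2 : ℂ)) * (v : ℂ) ^ (-s) := by
  have hsv : 0 < Real.sqrt v := Real.sqrt_pos.2 hv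
  have h1 : (0:ℝ) < u * Real.sqrt v := mul_pos hu hsv
  have h2 : (0:ℝ) < u / Real.sqrt v := div_pos hu hsv
  have e : ∀ {x : ℝ}, 0 < x → ∀ w : ℂ, ((x : ℝ) : ℂ) ^ w
      = Complex.exp ((Real.log x : ℂ) * w) := by
    intro x hx w
    rw [Complex.cpow_def_of_ne_zero (by exact_mod_cast hx.ne'), Complex.ofReal_log hx.le]
  rw [e h1, e h2, e hu, e hv, ← Complex.exp_add, ← Complex.exp_add]
  congr 1
  have l1 : Real.log (u * Real.sqrt v) = Real.log u + Real.log v / 2 := by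
    rw [Real.log_mul hu.ne' hsv.ne', Real.log_sqrt hv.le]
  have l2 : Real.log (u / Real.sqrt v) = Real.log u - Real.log v / 2 := by
    rw [Real.log_div hu.ne' hsv.ne', Real.log_sqrt hv.le]
  rw [l1, l2]
  push_cast
  ring

theorem d1Map_image :
    d1Map '' (Set.Ioi 0 ×ˢ Set.Ioi 0) = (Set.Ioi 0 ×ˢ Set.Ioi 0 : Set (ℝ × ℝ)) := by
  ext ⟨a, b⟩
  simp only [Set.mem_image, Set.mem_prod, Set.mem_Ioi, d1Map, Prod.mk.injEq, Prod.exists]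
  constructor
  · rintro ⟨u, v, ⟨hu, hv⟩, rfl, rfl⟩
    have hsv : 0 < Real.sqrt v := Real.sqrt_pos.2 hv
    exact ⟨mul_pos hu hsv, div_pos hu hsv⟩
  · rintro ⟨ha, hb⟩
    refine ⟨Real.sqrt (a * b), a / b, ⟨Real.sqrt_pos.2 (mul_pos ha hb), div_pos ha hb⟩, ?_, ?_⟩
    · rw [← Real.sqrt_mul (mul_pos ha hb).le]
      rw [show a * b * (a / b) = a ^ 2 by field_simp]
      exact Real.sqrt_sq ha.le
    · rw [← Real.sqrt_div (mul_pos ha hb).le]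
      rw [show a * b / (a / b) = b ^ 2 by field_simp]
      exact Real.sqrt_sq hb.le

theorem d1Map_injOn : Set.InjOn d1Map (Set.Ioi 0 ×ˢ Set.Ioi 0) := by
  rintro ⟨u, v⟩ ⟨hu, hv⟩ ⟨u', v'⟩ ⟨hu', hv'⟩ h
  simp only [Set.mem_Ioi] at hu hv hu' hv'
  simp only [d1Map, Prod.mk.injEq] at h
  obtain ⟨h1, h2⟩ := h
  have hsv : 0 < Real.sqrt v := Real.sqrt_pos.2 hv
  have hsv' : 0 < Real.sqrt v' := Real.sqrt_pos.2 hv'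
  have h2' : u * Real.sqrt v' = u' * Real.sqrt v := by
    field_simp at h2; linarith [h2]
  have husq : u * u = u' * u' := by nlinarith
  have huu : u = u' := by nlinarith
  have hvv : Real.sqrt v = Real.sqrt v' := by
    subst huu
    exact mul_left_cancel₀ hu.ne' h1
  have : v = v' := by
    rw [← Real.sq_sqrt hv.le, ← Real.sq_sqrt hv'.le, hvv]
  simp [huu, this]

end D1Aux2

/-- For a circularly symmetric Gaussian LSSP with covariance
`R(t,s) = Q(√(ts)) C(t/s)`, the cross term `D₁(θ,τ)` factorizes as
`(M|C|²)(i2πθ) · ∫₀^∞ Q(u√τ) Q*(u/√τ) du/u`. -/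
theorem D1_factorizes_for_lssp
    (Q C : ℝ → ℂ) (R : ℝ → ℝ → ℂ)
    (hR : ∀ u v : ℝ, 0 < u → 0 < v → R u v = Q (Real.sqrt (u * v)) * C (u / v))
    (θ τ : ℝ) (hτ : 0 < τ)
    (hInt : IntegrableOn
      (fun p : ℝ × ℝ =>
        R (p.1 * Real.sqrt τ) (p.2 * Real.sqrt τ) *
          (starRingEnd ℂ) (R (p.1 / Real.sqrt τ) (p.2 / Real.sqrt τ)) *
          (p.1 : ℂ) ^ (-(Complex.I * (2 * π * θ)) - 1) *
          (p.2 : ℂ) ^ (Complex.I * (2 * π * θ) - 1))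
      (Set.Ioi 0 ×ˢ Set.Ioi 0) volume) :
    ∫ p in (Set.Ioi 0 ×ˢ Set.Ioi 0 : Set (ℝ × ℝ)),
        R (p.1 * Real.sqrt τ) (p.2 * Real.sqrt τ) *
          (starRingEnd ℂ) (R (p.1 / Real.sqrt τ) (p.2 / Real.sqrt τ)) *
          (p.1 : ℂ) ^ (-(Complex.I * (2 * π * θ)) - 1) *
          (p.2 : ℂ) ^ (Complex.I * (2 * π * θ) - 1)
      = (∫ v in Set.Ioi (0 : ℝ),
            ((Complex.normSq (C v) : ℝ) : ℂ) *
              (v : ℂ) ^ (-(Complex.I * (2 * π * θ)) - 1)) *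
        ∫ u in Set.Ioi (0 : ℝ),
          Q (u * Real.sqrt τ) * (starRingEnd ℂ) (Q (u / Real.sqrt τ)) / (u : ℂ) := by
  clear hInt
  have hst : 0 < Real.sqrt τ := Real.sqrt_pos.2 hτ
  set s : ℂ := Complex.I * (2 * π * θ) with hs
  have hTm : MeasurableSet (Set.Ioi (0:ℝ) ×ˢ Set.Ioi (0:ℝ)) :=
    measurableSet_Ioi.prod measurableSet_Ioi
  have hder : ∀ p ∈ (Set.Ioi (0:ℝ) ×ˢ Set.Ioi (0:ℝ)),
      HasFDerivWithinAt d1Map (d1Der p) (Set.Ioi (0:ℝ) ×ˢ Set.Ioi (0:ℝ)) p := fun p hp =>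
    (d1Map_hasFDerivAt hp.2).hasFDerivWithinAt
  rw [← d1Map_image,
    integral_image_eq_integral_abs_det_fderiv_smul volume hTm hder d1Map_injOn]
  rw [show (∫ p in (Set.Ioi (0:ℝ) ×ˢ Set.Ioi (0:ℝ)),
        |(d1Der p).det| •
          (R ((d1Map p).1 * Real.sqrt τ) ((d1Map p).2 * Real.sqrt τ) *
            (starRingEnd ℂ) (R ((d1Map p).1 / Real.sqrt τ) ((d1Map p).2 / Real.sqrt τ)) *
            ((d1Map p).1 : ℂ) ^ (-s - 1) * ((d1Map p).2 : ℂ) ^ (s - 1)))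
      = ∫ p in (Set.Ioi (0:ℝ) ×ˢ Set.Ioi (0:ℝ)),
          (fun u : ℝ => Q (u * Real.sqrt τ) * (starRingEnd ℂ) (Q (u / Real.sqrt τ)) / (u : ℂ)) p.1
            * (fun v : ℝ =>
                ((Complex.normSq (C v) : ℝ) : ℂ) * (v : ℂ) ^ (-s - 1)) p.2 from ?_]
  · rw [MeasureTheory.Measure.volume_eq_prod, mul_comm]
    exact setIntegral_prod_mul
      (fun u : ℝ => Q (u * Real.sqrt τ) * (starRingEnd ℂ) (Q (u / Real.sqrt τ)) / (u : ℂ))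
      (fun v : ℝ => ((Complex.normSq (C v) : ℝ) : ℂ) * (v : ℂ) ^ (-s - 1)) _ _
  · apply setIntegral_congr_fun hTm
    rintro ⟨u, v⟩ ⟨hu, hv⟩
    simp only [Set.mem_Ioi] at hu hv
    have hsv : 0 < Real.sqrt v := Real.sqrt_pos.2 hv
    have hvv : Real.sqrt v * Real.sqrt v = v := Real.mul_self_sqrt hv.le
    have htt : Real.sqrt τ * Real.sqrt τ = τ := Real.mul_self_sqrt hτ.le
    have hu0 : (u : ℂ) ≠ 0 := by exact_mod_cast hu.ne'
    have hv0 : (v : ℂ) ≠ 0 := by exact_mod_cast hv.ne'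
    have hdet : |(d1Der (u, v)).det| = u / v := by
      rw [d1Der_det hv, abs_neg, abs_of_pos (div_pos hu hv)]
    have hmap : d1Map (u, v) = (u * Real.sqrt v, u / Real.sqrt v) := rfl
    -- rewrite R-factors
    have hA1 : (0:ℝ) < u * Real.sqrt v * Real.sqrt τ := by positivity
    have hA2 : (0:ℝ) < u / Real.sqrt v * Real.sqrt τ := by positivity
    have hB1 : (0:ℝ) < u * Real.sqrt v / Real.sqrt τ := by positivity
    have hB2 : (0:ℝ) < u / Real.sqrt v / Real.sqrt τ := by positivity
    have hR1 : R (u * Real.sqrt v * Real.sqrt τ) (u / Real.sqrt v * Real.sqrt τ)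
        = Q (u * Real.sqrt τ) * C v := by
      rw [hR _ _ hA1 hA2]
      congr 1
      · congr 1
        rw [show u * Real.sqrt v * Real.sqrt τ * (u / Real.sqrt v * Real.sqrt τ)
            = (u * Real.sqrt τ) ^ 2 by field_simp]
        exact Real.sqrt_sq (by positivity)
      · congr 1
        field_simp
        linear_combination hvv
    have hR2 : R (u * Real.sqrt v / Real.sqrt τ) (u / Real.sqrt v / Real.sqrt τ)
        = Q (u / Real.sqrt τ) * C v := by
      rw [hR _ _ hB1 hB2]
      congr 1
      · congr 1
        rw [show u * Real.sqrt v / Real.sqrt τ * (u / Real.sqrt v / Real.sqrt τ)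
            = (u / Real.sqrt τ) ^ 2 by field_simp]
        exact Real.sqrt_sq (by positivity)
      · congr 1
        field_simp
        linear_combination hvv
    simp only [hmap, hdet, hR1, hR2]
    rw [mul_assoc (Q (u * Real.sqrt τ) * C v * (starRingEnd ℂ) (Q (u / Real.sqrt τ) * C v)),
      d1_cpow_split hu hv s, Complex.real_smul, map_mul]
    have hc : C v * (starRingEnd ℂ) (C v) = ((Complex.normSq (C v) : ℝ) : ℂ) :=
      Complex.mul_conj (C v)
    have hpow2 : (u : ℂ) ^ (-2 : ℂ) = ((u : ℂ) ^ (2 : ℕ))⁻¹ := by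
      rw [show (-2 : ℂ) = -((2 : ℕ) : ℂ) by norm_num, Complex.cpow_neg, Complex.cpow_natCast]
    have hpows : (v : ℂ) ^ (-s - 1) = (v : ℂ) ^ (-s) * ((v : ℂ))⁻¹ := by
      rw [show -s - 1 = -s + (-1) by ring, Complex.cpow_add _ _ hv0, Complex.cpow_neg_one]
    rw [hpow2, hpows]
    push_cast
    field_simp
    linear_combination Q (u * Real.sqrt τ)
        * (starRingEnd ℂ) (Q (u / Real.sqrt τ)) * ((v:ℂ)^(-s)) * hc
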